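/- Any second-order limit function h arising in the 2RV condition lim_{s→∞}((v(sx)/v(s) − x^{−α})/Ã(s)) = h(x) with Ã ∈ RV_{−ρα}, ρα > 0, is necessarily of the form h(x) = c·x^{−α}·(1 − x^{−ρα})/(ρα) for some constant c ≠ 0, for all x > 0. -/

import Mathlib

open Filter

/-- `f` is regularly varying at infinity with index `c`. -/
def RegVary (f : ℝ → ℝ) (c : ℝ) : Prop :=
  ∀ x > (0 : ℝ), Filter.Tendsto (fun t => f (t * x) / f t) Filter.atTop (nhds (x ^ c))

theorem stmt15 (v Atil h : ℝ → ℝ) (α ρ : ℝ) (hα : 0 < α) (hρ : 0 < ρ)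
    (hv : RegVary v (-α)) (hvpos : ∀ t > (0 : ℝ), 0 < v t)
    (hAtil : RegVary Atil (-(ρ * α)))
    (hAtil0 : Tendsto Atil atTop (nhds 0))
    (hAtilne : ∀ t > (0 : ℝ), Atil t ≠ 0)
    (hlim : ∀ x > (0 : ℝ),
      Tendsto (fun s => (v (s * x) / v s - x ^ (-α)) / Atil s) atTop (nhds (h x)))
    (hne : ∃ x > (0 : ℝ), h x ≠ 0) :
    ∃ c : ℝ, c ≠ 0 ∧ ∀ x > (0 : ℝ),
      h x = c * x ^ (-α) * (1 - x ^ (-(ρ * α))) / (ρ * α) := by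
  -- functional equation
  have key : ∀ x > (0:ℝ), ∀ y > (0:ℝ),
      h (x*y) = h y * x ^ (-(ρ*α)) * x ^ (-α) + y ^ (-α) * h x := by
    intro x hx y hy
    have hx' : Tendsto (fun s : ℝ => s * x) atTop atTop :=
      Tendsto.atTop_mul_const hx tendsto_id
    have h1 : Tendsto (fun s => (v (s*x*y) / v (s*x) - y ^ (-α)) / Atil (s*x))
        atTop (nhds (h y)) := (hlim y hy).comp hx'
    have h2 := hAtil x hx
    have h3 := hv x hx
    have h4 := hlim x hx
    have hcomb : Tendsto (fun s =>
        ((v (s*x*y) / v (s*x) - y ^ (-α)) / Atil (s*x)) * (Atil (s*x) / Atil s)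
          * (v (s*x) / v s)
        + y ^ (-α) * ((v (s*x) / v s - x ^ (-α)) / Atil s))
        atTop (nhds (h y * x ^ (-(ρ*α)) * x ^ (-α) + y ^ (-α) * h x)) :=
      ((h1.mul h2).mul h3).add (tendsto_const_nhds.mul h4)
    have heq : (fun s =>
        ((v (s*x*y) / v (s*x) - y ^ (-α)) / Atil (s*x)) * (Atil (s*x) / Atil s)
          * (v (s*x) / v s)
        + y ^ (-α) * ((v (s*x) / v s - x ^ (-α)) / Atil s))
        =ᶠ[atTop] (fun s => (v (s * (x*y)) / v s - (x*y) ^ (-α)) / Atil s) := by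
      filter_upwards [eventually_gt_atTop (0:ℝ)] with s hs
      have hsx : (0:ℝ) < s * x := mul_pos hs hx
      have hvs := (hvpos s hs).ne'
      have hvsx := (hvpos _ hsx).ne'
      have hAs := hAtilne s hs
      have hAsx := hAtilne _ hsx
      have hxy : (x*y) ^ (-α) = x ^ (-α) * y ^ (-α) :=
        Real.mul_rpow hx.le hy.le
      rw [← mul_assoc, hxy]
      field_simp
      ring
    have := hcomb.congr' heq
    exact tendsto_nhds_unique (hlim (x*y) (mul_pos hx hy)) this
  have h1 : h 1 = 0 := by
    have := key 1 one_pos 1 one_pos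
    simp [Real.one_rpow] at this
    linarith
  obtain ⟨x0, hx0, hhx0⟩ := hne
  have hx01 : x0 ≠ 1 := by rintro rfl; exact hhx0 h1
  have hra : ρ * α ≠ 0 := (mul_pos hρ hα).ne'
  have hx0r : x0 ^ (-(ρ*α)) ≠ 1 := by
    intro hcontra
    have : (-(ρ*α)) * Real.log x0 = 0 := by
      rw [← Real.log_rpow hx0, hcontra, Real.log_one]
    rcases mul_eq_zero.mp this with h' | h'
    · exact (neg_ne_zero.mpr hra) h'
    · rcases Real.log_eq_zero.mp h' with h'' | h'' | h''
      · exact hx0.ne' h''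
      · exact hx01 h''
      · linarith
  have hx0a : (0:ℝ) < x0 ^ (-α) := Real.rpow_pos_of_pos hx0 _
  have hD : x0 ^ (-(ρ*α)) * x0 ^ (-α) - x0 ^ (-α) ≠ 0 := by
    intro hc
    apply hx0r
    have : (x0 ^ (-(ρ*α)) - 1) * x0 ^ (-α) = 0 := by ring_nf; linarith [hc]
    rcases mul_eq_zero.mp this with h' | h'
    · linarith
    · exact absurd h' hx0a.ne'
  -- symmetry relation
  have sym : ∀ x > (0:ℝ),
      h x0 * (x ^ (-(ρ*α)) * x ^ (-α) - x ^ (-α))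
        = h x * (x0 ^ (-(ρ*α)) * x0 ^ (-α) - x0 ^ (-α)) := by
    intro x hx
    have e1 := key x hx x0 hx0
    have e2 := key x0 hx0 x hx
    rw [mul_comm x x0] at e1
    rw [e1] at e2
    linarith [e2]
  refine ⟨h x0 * (ρ*α) / (x0 ^ (-α) * (1 - x0 ^ (-(ρ*α)))), ?_, ?_⟩
  · have hden : x0 ^ (-α) * (1 - x0 ^ (-(ρ*α))) ≠ 0 := by
      intro hc
      rcases mul_eq_zero.mp hc with h' | h'
      · exact hx0a.ne' h'
      · apply hx0r; linarith
    exact div_ne_zero (mul_ne_zero hhx0 hra) hden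
  · intro x hx
    have := sym x hx
    have hden : x0 ^ (-α) * (1 - x0 ^ (-(ρ*α))) ≠ 0 := by
      intro hc
      rcases mul_eq_zero.mp hc with h' | h'
      · exact hx0a.ne' h'
      · apply hx0r; linarith
    field_simp
    linear_combination this
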